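/- arXiv:1606.03204 — 6 statements merged into one kernel-verified Lean document; each statement's English description precedes it below -/
import Mathlib

section
/- The three functions H = (p₁² + p₂²)/2 − 1/√(x²+y²), I₁ = p₂x − p₁y, and I₂ = p₂(p₁y − p₂x) + x/√(x²+y²) are functionally independent on the set {x² + y² ≠ 0}: there exists a point where the gradients of H, I₁, I₂ are linearly independent. -/
set_option maxHeartbeats 1000000

/-- Partial derivative of a function on ℝ⁴ in the i-th coordinate direction. -/
noncomputable def pd (i : Fin 4) (F : (Fin 4 → ℝ) → ℝ) (v : Fin 4 → ℝ) : ℝ :=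
  fderiv ℝ F v (Pi.single i 1)

/-- Gradient (vector of partial derivatives) of a function on ℝ⁴. -/
noncomputable def grad (F : (Fin 4 → ℝ) → ℝ) (v : Fin 4 → ℝ) : Fin 4 → ℝ :=
  fun i => pd i F v

/-- H, I₁, I₂ are functionally independent on {x²+y² ≠ 0}: there is a point
where their gradients are linearly independent. -/
theorem functional_independence :
    ∃ v : Fin 4 → ℝ, (v 0)^2 + (v 1)^2 ≠ 0 ∧
      LinearIndependent ℝ
        ![grad (fun v => ((v 2)^2 + (v 3)^2)/2 - 1/Real.sqrt ((v 0)^2 + (v 1)^2)) v,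
          grad (fun v => v 3 * v 0 - v 2 * v 1) v,
          grad (fun v => v 3 * (v 2 * v 1 - v 3 * v 0)
                  + v 0 / Real.sqrt ((v 0)^2 + (v 1)^2)) v] := by
  set v0 : Fin 4 → ℝ := ![1,0,1,1] with hv0
  have hp := fun i : Fin 4 => hasFDerivAt_apply (𝕜 := ℝ) i v0
  have hs := ((hasDerivAt_pow 2 (v0 0)).comp_hasFDerivAt v0 (hp 0)).add
      ((hasDerivAt_pow 2 (v0 1)).comp_hasFDerivAt v0 (hp 1))
  have hne0 : (v0 0)^2 + (v0 1)^2 ≠ 0 := by norm_num [hv0]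
  have hne : Real.sqrt ((v0 0)^2 + (v0 1)^2) ≠ 0 := by
    simp only [hv0]; norm_num
  -- gradient of H
  have hone : HasDerivAt (fun t : ℝ => 1 / Real.sqrt t) _ ((v0 0)^2 + (v0 1)^2) :=
    (hasDerivAt_const _ (1:ℝ)).div (Real.hasDerivAt_sqrt hne0) hne
  have hinv := hone.comp_hasFDerivAt v0 hs
  have hkin := ((hasDerivAt_pow 2 (v0 2)).comp_hasFDerivAt v0 (hp 2)).add
      ((hasDerivAt_pow 2 (v0 3)).comp_hasFDerivAt v0 (hp 3))
  have h1 := (((hasDerivAt_id ((v0 2)^2 + (v0 3)^2)).div_const 2).comp_hasFDerivAt v0 hkin).sub hinv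
  have h1' : HasFDerivAt
      (fun v : Fin 4 → ℝ => ((v 2)^2 + (v 3)^2)/2 - 1/Real.sqrt ((v 0)^2 + (v 1)^2)) _ v0 := h1
  have e1 := h1'.fderiv
  have g1 : grad (fun v => ((v 2)^2 + (v 3)^2)/2 - 1/Real.sqrt ((v 0)^2 + (v 1)^2)) v0
      = ![1,0,1,1] := by
    funext i
    show fderiv ℝ _ v0 (Pi.single i 1) = _
    rw [e1]
    fin_cases i <;> simp [hv0, Pi.single_apply, Real.sqrt_one]
  -- gradient of I1
  have h2 := ((hp 3).mul (hp 0)).sub ((hp 2).mul (hp 1))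
  have h2' : HasFDerivAt (fun v : Fin 4 → ℝ => v 3 * v 0 - v 2 * v 1) _ v0 := h2
  have e2 := h2'.fderiv
  have g2 : grad (fun v => v 3 * v 0 - v 2 * v 1) v0 = ![1,-1,0,1] := by
    funext i
    show fderiv ℝ _ v0 (Pi.single i 1) = _
    rw [e2]
    fin_cases i <;> simp [hv0, Pi.single_apply]
  -- gradient of I2
  have hinv1 : HasDerivAt (fun t : ℝ => (Real.sqrt t)⁻¹) _ ((v0 0)^2 + (v0 1)^2) :=
    (Real.hasDerivAt_sqrt hne0).inv hne
  have hinvs := hinv1.comp_hasFDerivAt v0 hs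
  have h3 := ((hp 3).mul (((hp 2).mul (hp 1)).sub ((hp 3).mul (hp 0)))).add ((hp 0).mul hinvs)
  have h3' : HasFDerivAt (fun v : Fin 4 → ℝ => v 3 * (v 2 * v 1 - v 3 * v 0)
      + v 0 / Real.sqrt ((v 0)^2 + (v 1)^2)) _ v0 := h3
  have e3 := h3'.fderiv
  have g3 : grad (fun v => v 3 * (v 2 * v 1 - v 3 * v 0)
      + v 0 / Real.sqrt ((v 0)^2 + (v 1)^2)) v0 = ![-1,1,0,-2] := by
    funext i
    show fderiv ℝ _ v0 (Pi.single i 1) = _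
    rw [e3]
    fin_cases i <;> simp [hv0, Pi.single_apply, Real.sqrt_one] <;> norm_num
  refine ⟨v0, hne0, ?_⟩
  rw [g1, g2, g3]
  rw [Fintype.linearIndependent_iff]
  intro g hg
  have h0 := congrFun hg 0
  have h1 := congrFun hg 1
  have h3 := congrFun hg 3
  simp [Fin.sum_univ_three] at h0 h1 h3
  intro i
  fin_cases i <;> simp <;> linarith
end

section
/- Let p ∈ ℤ and γ = (−3 + 5p − 2p²)/(1 − 5p + 2p²), assuming the denominator is nonzero. If γ ≥ 0 then γ = 0 or γ = 1. -/
theorem gamma_values_case1 (p : ℤ)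
    (hden : (1 - 5 * (p : ℚ) + 2 * (p : ℚ)^2) ≠ 0)
    (γ : ℚ) (hγ : γ = (-3 + 5 * (p : ℚ) - 2 * (p : ℚ)^2) / (1 - 5 * (p : ℚ) + 2 * (p : ℚ)^2))
    (hpos : 0 ≤ γ) : γ = 0 ∨ γ = 1 := by
  set d : ℤ := 2 * p ^ 2 - 5 * p + 1 with hdef
  have hd : (1 - 5 * (p : ℚ) + 2 * (p : ℚ)^2) = (d : ℚ) := by push_cast [hdef]; ring
  have hn : (-3 + 5 * (p : ℚ) - 2 * (p : ℚ)^2) = (-(d : ℚ) - 2) := by push_cast [hdef]; ring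
  rw [hd, hn] at hγ
  rw [hd] at hden
  have hdz : d ≠ 0 := by exact_mod_cast hden
  rw [hγ] at hpos
  clear_value d
  clear hdef
  have hcases : d = -1 ∨ d = -2 := by
    rcases div_nonneg_iff.mp hpos with ⟨h1, h2⟩ | ⟨h1, h2⟩
    · have h1' : (0:ℚ) ≤ -(d:ℚ) - 2 := h1
      have hdle : (d:ℚ) ≤ -2 := by linarith
      have hdge : (0:ℚ) ≤ (d:ℚ) := h2
      have h2' : (0:ℤ) ≤ d := by exact_mod_cast hdge
      have h1' : (d:ℤ) ≤ -2 := by exact_mod_cast hdle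
      omega
    · have hdle : (d:ℚ) ≥ -2 := by linarith
      have h2' : (d:ℤ) ≤ 0 := by exact_mod_cast h2
      have h1' : (-2:ℤ) ≤ d := by exact_mod_cast hdle
      omega
  rcases hcases with h | h
  · right; rw [hγ, h]; norm_num
  · left; rw [hγ, h]; norm_num
end

section
/- Let p ∈ ℤ and γ = (p − 2p²)/(−2 − p + 2p²), assuming the denominator is nonzero. If γ ≥ 0 then γ = 0 or γ = 1. -/
theorem gamma_values_case2 (p : ℤ)
    (hden : (-2 - (p : ℚ) + 2 * (p : ℚ)^2) ≠ 0)
    (γ : ℚ) (hγ : γ = ((p : ℚ) - 2 * (p : ℚ)^2) / (-2 - (p : ℚ) + 2 * (p : ℚ)^2))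
    (hpos : 0 ≤ γ) : γ = 0 ∨ γ = 1 := by
  rcases eq_or_ne p 0 with h0 | h0
  · left; subst h0; rw [hγ]; norm_num
  rcases eq_or_ne p 1 with h1 | h1
  · right; subst h1; rw [hγ]; norm_num
  exfalso
  have hp : p ≤ -1 ∨ 2 ≤ p := by omega
  have hNz : p - 2 * p ^ 2 < 0 := by rcases hp with h | h <;> nlinarith
  have hDz : 0 < -2 - p + 2 * p ^ 2 := by rcases hp with h | h <;> nlinarith
  have hN : (p : ℚ) - 2 * (p : ℚ)^2 < 0 := by exact_mod_cast hNz
  have hD : 0 < -2 - (p : ℚ) + 2 * (p : ℚ)^2 := by exact_mod_cast hDz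
  have := div_neg_of_neg_of_pos hN hD
  rw [hγ] at hpos; linarith
end

section
/- Let p ∈ ℤ and γ = (−1 + 3p − 2p²)/(−1 − 3p + 2p²), assuming the denominator is nonzero. If γ ≥ 0 then γ = 0 or γ = 1. -/
theorem gamma_values_case3 (p : ℤ)
    (hden : (-1 - 3 * (p : ℚ) + 2 * (p : ℚ)^2) ≠ 0)
    (γ : ℚ) (hγ : γ = (-1 + 3 * (p : ℚ) - 2 * (p : ℚ)^2) / (-1 - 3 * (p : ℚ) + 2 * (p : ℚ)^2))
    (hpos : 0 ≤ γ) : γ = 0 ∨ γ = 1 := by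
  set d : ℤ := 2 * p ^ 2 - 3 * p - 1 with hd
  have hD : (-1 - 3 * (p : ℚ) + 2 * (p : ℚ)^2) = (d : ℚ) := by rw [hd]; push_cast; ring
  have hN : (-1 + 3 * (p : ℚ) - 2 * (p : ℚ)^2) = -((d : ℚ) + 2) := by rw [hd]; push_cast; ring
  rw [hD] at hden
  rw [hD, hN] at hγ
  have hdz : d ≠ 0 := by exact_mod_cast hden
  have hdval : d = -1 ∨ d = -2 := by
    rw [hγ] at hpos
    rcases div_nonneg_iff.mp hpos with ⟨h1, h2⟩ | ⟨h1, h2⟩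
    · have e2 : (0:ℤ) ≤ d := by exact_mod_cast h2
      have e1 : d + 2 ≤ 0 := by exact_mod_cast (by linarith : (d:ℚ) + 2 ≤ 0)
      omega
    · have e1 : 0 ≤ d + 2 := by exact_mod_cast (by linarith : (0:ℚ) ≤ (d:ℚ) + 2)
      have e2 : d ≤ 0 := by exact_mod_cast h2
      omega
  rcases hdval with h | h
  · -- d = -1 : p = 0, γ = 1
    have h2 : 2 * p ^ 2 - 3 * p - 1 = -1 := hd.symm.trans h
    have hp : p * (2 * p - 3) = 0 := by linear_combination h2
    rcases mul_eq_zero.mp hp with hp0 | hp0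
    · right
      rw [hγ, h]
      norm_num
    · omega
  · -- d = -2 : p = 1, γ = 0
    have h2 : 2 * p ^ 2 - 3 * p - 1 = -2 := hd.symm.trans h
    have hp : (p - 1) * (2 * p - 1) = 0 := by linear_combination h2
    rcases mul_eq_zero.mp hp with hp0 | hp0
    · left
      rw [hγ, h]
      norm_num
    · omega
end

section
/- Let γ ≥ 0 be real and λ = (1/2)·√((17γ + 1)/(γ + 1)). If λ + 3/2 is an odd integer, or −λ + 3/2 is an odd integer, then γ = 0 or γ = 1. -/
/-- Kimura's condition ±λ + σ + ν an odd integer (with σ = 1, ν = 1/2) for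
λ = (1/2)√((17γ+1)/(γ+1)) forces γ ∈ {0, 1}. -/
theorem kimura_odd_condition (γ : ℝ) (hγ : 0 ≤ γ)
    (lam : ℝ) (hlam : lam = (1/2) * Real.sqrt ((17 * γ + 1)/(γ + 1)))
    (h : (∃ n : ℤ, Odd n ∧ lam + 3/2 = (n : ℝ)) ∨
         (∃ n : ℤ, Odd n ∧ -lam + 3/2 = (n : ℝ))) :
    γ = 0 ∨ γ = 1 := by
  have hg1 : (0:ℝ) < γ + 1 := by linarith
  set r : ℝ := (17 * γ + 1)/(γ + 1) with hr
  have hr0 : (0:ℝ) ≤ r := by positivity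
  have hr1 : (1:ℝ) ≤ r := by rw [hr, le_div_iff₀ hg1]; linarith
  have hr25 : r < 25 := by rw [hr, div_lt_iff₀ hg1]; linarith
  have hs1 : (1:ℝ) ≤ Real.sqrt r := by
    have := Real.sqrt_le_sqrt hr1
    simpa using this
  have hs5 : Real.sqrt r < 5 := by
    rw [show (5:ℝ) = Real.sqrt 25 by
      rw [show (25:ℝ) = 5^2 by norm_num, Real.sqrt_sq (by norm_num)]]
    exact Real.sqrt_lt_sqrt hr0 hr25
  have hsq : Real.sqrt r ^ 2 = r := Real.sq_sqrt hr0
  rcases h with ⟨n, hodd, hn⟩ | ⟨n, hodd, hn⟩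
  · -- lam + 3/2 = n, with 2 ≤ n < 4, odd → n = 3
    have h2 : (2:ℤ) ≤ n := by
      have : (2:ℝ) ≤ (n:ℝ) := by rw [← hn, hlam]; linarith
      exact_mod_cast this
    have h4 : n < 4 := by
      have : (n:ℝ) < 4 := by rw [← hn, hlam]; linarith
      exact_mod_cast this
    have hn3 : n = 3 := by
      interval_cases n
      · exact absurd hodd (by decide)
      · rfl
    have hlam32 : lam = 3/2 := by
      have := hn; rw [hn3] at this; push_cast at this; linarith
    have hs3 : Real.sqrt r = 3 := by
      rw [hlam32] at hlam; linarith
    have hr9 : r = 9 := by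
      rw [← hsq, hs3]; norm_num
    right
    rw [hr, div_eq_iff (ne_of_gt hg1)] at hr9
    linarith
  · have h0 : (-1:ℤ) < n := by
      have : (-1:ℝ) < (n:ℝ) := by rw [← hn, hlam]; linarith
      exact_mod_cast this
    have h1 : n ≤ 1 := by
      have : (n:ℝ) ≤ 1 := by rw [← hn, hlam]; linarith
      exact_mod_cast this
    have hn1 : n = 1 := by
      interval_cases n
      · exact absurd hodd (by decide)
      · rfl
    have hlam12 : lam = 1/2 := by
      have := hn; rw [hn1] at this; push_cast at this; linarith
    have hs3 : Real.sqrt r = 1 := by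
      rw [hlam12] at hlam; linarith
    have hr9 : r = 1 := by
      rw [← hsq, hs3]; norm_num
    left
    rw [hr, div_eq_iff (ne_of_gt hg1)] at hr9
    linarith
end

section
/- Let γ ≥ 0 be real with λ = (1/2)√((17γ+1)/(γ+1)). If λ = 1/2 + p for some p ∈ ℤ, then γ = 0 or γ = 1. -/
/-- The Schwarz-table condition λ = 1/2 + p with p ∈ ℤ forces γ ∈ {0, 1}. -/
theorem schwarz_condition (γ : ℝ) (hγ : 0 ≤ γ)
    (lam : ℝ) (hlam : lam = (1/2) * Real.sqrt ((17 * γ + 1)/(γ + 1)))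
    (h : ∃ p : ℤ, lam = 1/2 + (p : ℝ)) :
    γ = 0 ∨ γ = 1 := by
  obtain ⟨p, hp⟩ := h
  set r : ℝ := (17 * γ + 1)/(γ + 1) with hr
  have hden : (0:ℝ) < γ + 1 := by linarith
  have hrnn : 0 ≤ r := div_nonneg (by linarith) hden.le
  have hr1 : 1 ≤ r := (one_le_div hden).2 (by linarith)
  have hr17 : r < 25 := (div_lt_iff₀ hden).2 (by linarith)
  have hs1 : 1 ≤ Real.sqrt r := by
    rw [show (1:ℝ) = Real.sqrt 1 by simp]
    exact Real.sqrt_le_sqrt hr1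
  have hs5 : Real.sqrt r < 5 := by
    have : Real.sqrt r < Real.sqrt 25 := by
      rw [Real.sqrt_lt_sqrt_iff hrnn]; exact hr17
    simpa [show (25:ℝ) = 5^2 by norm_num, Real.sqrt_sq] using this
  -- √r = 1 + 2p
  have hsp : Real.sqrt r = 1 + 2 * (p : ℝ) := by
    rw [hlam] at hp; linarith
  have hp0 : 0 ≤ (p : ℝ) := by linarith
  have hp2 : (p : ℝ) < 2 := by linarith
  have hp0' : 0 ≤ p := by exact_mod_cast hp0
  have hp2' : p < 2 := by exact_mod_cast hp2
  have hsq : r = (1 + 2 * (p : ℝ))^2 := by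
    rw [← hsp, Real.sq_sqrt hrnn]
  interval_cases p
  · left
    have : r = 1 := by norm_num at hsq; exact hsq
    have := (div_eq_iff hden.ne').1 this
    linarith
  · right
    have : r = 9 := by norm_num at hsq; linarith [hsq]
    have := (div_eq_iff hden.ne').1 this
    linarith
end
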